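/- arXiv:1908.03268 — 2 statements merged into one kernel-verified Lean document; each statement's English description precedes it below -/
import Mathlib

section
/- (Birkhoff–Kakutani metrization for locally paracompact groupoids) Let G be an open topological groupoid. For any open grey subset U : G → [0,1] and any unital open subset V ⊆ G which is Hausdorff and paracompact in the subspace topology with G⁰ ∩ V ⊆ {g : U(g) = 0}, there is an open strict grey subgroupoid W : G → [0,1] with W(g) ≥ U(g) for all g ∈ G and G⁰ ∩ {x : W(x) = 0} = G⁰ ∩ V. -/
open Set Topology

attribute [local instance] Classical.propDecidable

/-- A small groupoid, presented on its space of morphisms `G`, with objects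
identified with unit morphisms.  `comp g h` is only meaningful when
`src g = tgt h`; its values elsewhere are irrelevant junk. -/
structure Groupoidal (G : Type*) where
  src : G → G
  tgt : G → G
  comp : G → G → G
  inv : G → G
  src_src : ∀ g, src (src g) = src g
  tgt_of_src : ∀ g, tgt (src g) = src g
  src_of_tgt : ∀ g, src (tgt g) = tgt g
  tgt_tgt : ∀ g, tgt (tgt g) = tgt g
  comp_src : ∀ g, comp g (src g) = g
  tgt_comp_self : ∀ g, comp (tgt g) g = g
  src_comp : ∀ g h, src g = tgt h → src (comp g h) = src h
  tgt_comp : ∀ g h, src g = tgt h → tgt (comp g h) = tgt g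
  comp_assoc : ∀ g h k, src g = tgt h → src h = tgt k →
    comp (comp g h) k = comp g (comp h k)
  src_inv : ∀ g, src (inv g) = tgt g
  tgt_inv : ∀ g, tgt (inv g) = src g
  comp_inv_self : ∀ g, comp g (inv g) = tgt g
  inv_comp_self : ∀ g, comp (inv g) g = src g

namespace Groupoidal

variable {G : Type*} (S : Groupoidal G)

/-- The set of objects (= unit morphisms) of the groupoid. -/
def units : Set G := {x | S.src x = x}

/-- Two morphisms are composable when the source of the first matches the
target of the second. -/
def Composable (g h : G) : Prop := S.src g = S.tgt h

/-- Pointwise product of two subsets of a groupoid. -/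
def setMul (A B : Set G) : Set G :=
  {k | ∃ g ∈ A, ∃ h ∈ B, S.Composable g h ∧ k = S.comp g h}

/-- Pointwise inverse of a subset of a groupoid. -/
def setInv (A : Set G) : Set G := S.inv '' A

def IsSymmetric (A : Set G) : Prop := S.setInv A = A

def IsUnital (A : Set G) : Prop := S.src '' A ⊆ A ∧ S.tgt '' A ⊆ A

/-- A subgroupoid: a subset closed under inverse and multiplication. -/
def IsSubgroupoid (A : Set G) : Prop := S.IsSymmetric A ∧ S.setMul A A ⊆ A

/-- A topological groupoid: all structure maps are continuous (multiplication
on the subspace of composable pairs). -/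
structure IsTopological [TopologicalSpace G] : Prop where
  continuous_src : Continuous S.src
  continuous_tgt : Continuous S.tgt
  continuous_inv : Continuous S.inv
  continuous_comp :
    Continuous fun p : {p : G × G // S.Composable p.1 p.2} => S.comp p.1.1 p.1.2

/-- An open topological groupoid: the source map is open. -/
def IsOpenGroupoid [TopologicalSpace G] : Prop := IsOpenMap S.src

/-- A non-Archimedean topological groupoid: every unit morphism has a
neighborhood basis of open subgroupoids. -/
def IsNonArchimedean [TopologicalSpace G] : Prop :=
  ∀ x ∈ S.units, ∀ W ∈ nhds x, ∃ U : Set G,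
    IsOpen U ∧ x ∈ U ∧ U ⊆ W ∧ S.IsSubgroupoid U

/-- A standard Borel groupoid structure: all structure maps are Borel. -/
structure IsBorelGroupoid [MeasurableSpace G] : Prop where
  measurable_src : Measurable S.src
  measurable_tgt : Measurable S.tgt
  measurable_inv : Measurable S.inv
  measurable_comp :
    Measurable fun p : {p : G × G // S.Composable p.1 p.2} => S.comp p.1.1 p.1.2

end Groupoidal

/-- A `Π⁰₂` subset of a topological space: a countable intersection of sets
of the form (closed ∪ open). -/
def IsPi02 {X : Type*} [TopologicalSpace X] (A : Set X) : Prop :=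
  ∃ C O : ℕ → Set X, (∀ n, IsClosed (C n)) ∧ (∀ n, IsOpen (O n)) ∧
    A = ⋂ n, C n ∪ O n

/-- A quasi-Polish space: homeomorphic to a `Π⁰₂` subspace of `𝕊^ℕ`, where
`𝕊 = Prop` is the Sierpiński space. -/
def IsQuasiPolish (X : Type*) [TopologicalSpace X] : Prop :=
  ∃ A : Set (ℕ → Prop), IsPi02 A ∧ Nonempty (X ≃ₜ ↥A)

/-- A σ-locally Polish space: a countable cover by open Polish subspaces. -/
def IsSigmaLocallyPolish (X : Type*) [TopologicalSpace X] : Prop :=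
  ∃ V : ℕ → Set X, (∀ n, IsOpen (V n)) ∧ (∀ n, PolishSpace (V n)) ∧
    (⋃ n, V n) = Set.univ

/-- A functor between groupoids presented on their spaces of morphisms. -/
structure GFunctor {G H : Type*} (S : Groupoidal G) (T : Groupoidal H) where
  toFun : G → H
  map_src : ∀ g, toFun (S.src g) = T.src (toFun g)
  map_tgt : ∀ g, toFun (S.tgt g) = T.tgt (toFun g)
  map_comp : ∀ g h, S.Composable g h →
    toFun (S.comp g h) = T.comp (toFun g) (toFun h)

namespace GFunctor

variable {G H K : Type*} {S : Groupoidal G} {T : Groupoidal H} {R : Groupoidal K}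

/-- The identity functor. -/
def id (S : Groupoidal G) : GFunctor S S :=
  ⟨fun g => g, fun _ => rfl, fun _ => rfl, fun _ _ _ => rfl⟩

/-- Composition of functors. -/
def comp (F₂ : GFunctor T R) (F₁ : GFunctor S T) : GFunctor S R where
  toFun := F₂.toFun ∘ F₁.toFun
  map_src g := by simp only [Function.comp_apply, F₁.map_src, F₂.map_src]
  map_tgt g := by simp only [Function.comp_apply, F₁.map_tgt, F₂.map_tgt]
  map_comp g h hc := by
    have hc' : T.Composable (F₁.toFun g) (F₁.toFun h) := by
      unfold Groupoidal.Composable at hc ⊢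
      rw [← F₁.map_src, ← F₁.map_tgt, hc]
    simp only [Function.comp_apply, F₁.map_comp g h hc, F₂.map_comp _ _ hc']

/-- A functor is full if it is surjective on each hom-set. -/
def Full (F : GFunctor S T) : Prop :=
  ∀ x ∈ S.units, ∀ y ∈ S.units, ∀ k : H,
    T.src k = F.toFun x → T.tgt k = F.toFun y →
      ∃ g : G, S.src g = x ∧ S.tgt g = y ∧ F.toFun g = k

/-- A functor is faithful if it is injective on each hom-set. -/
def Faithful (F : GFunctor S T) : Prop :=
  ∀ g g' : G, S.src g = S.src g' → S.tgt g = S.tgt g' →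
    F.toFun g = F.toFun g' → g = g'

end GFunctor

/-- A natural transformation (automatically an isomorphism, between functors
of groupoids); `app` is only meaningful on unit morphisms. -/
structure GNatIso {G H : Type*} {S : Groupoidal G} {T : Groupoidal H}
    (F F' : GFunctor S T) where
  app : G → H
  app_src : ∀ x ∈ S.units, T.src (app x) = F.toFun x
  app_tgt : ∀ x ∈ S.units, T.tgt (app x) = F'.toFun x
  naturality : ∀ g : G,
    T.comp (app (S.tgt g)) (F.toFun g) = T.comp (F'.toFun g) (app (S.src g))

/-- A Borel functor which is an equivalence of groupoids witnessed by a Borel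
inverse functor and Borel natural isomorphisms. -/
def IsBorelEquivalence {G H : Type*} [MeasurableSpace G] [MeasurableSpace H]
    {S : Groupoidal G} {T : Groupoidal H} (F : GFunctor S T) : Prop :=
  Measurable F.toFun ∧
  ∃ F' : GFunctor T S, Measurable F'.toFun ∧
    (∃ α : GNatIso (F.comp F') (GFunctor.id T), Measurable α.app) ∧
    (∃ β : GNatIso (F'.comp F) (GFunctor.id S), Measurable β.app)

/-- A grey subset of a topological space is open if all of its strict sublevel
sets are open. -/
def GreyOpen {X : Type*} [TopologicalSpace X] (U : X → ℝ) : Prop :=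
  ∀ r : ℝ, IsOpen {x | U x < r}

/-- A strict grey subgroupoid: `{0,1}`-valued on units, strictly unital,
symmetric, and subadditive under composition. -/
def Groupoidal.IsStrictGreySubgroupoid {G : Type*} (S : Groupoidal G)
    (W : G → ℝ) : Prop :=
  (∀ g, W g ∈ Set.Icc (0 : ℝ) 1) ∧
  (∀ x ∈ S.units, W x = 0 ∨ W x = 1) ∧
  (∀ g, W g < 1 → W (S.src g) = 0 ∧ W (S.tgt g) = 0) ∧
  (∀ g, W (S.inv g) = W g) ∧
  (∀ g h, S.Composable g h → W (S.comp g h) ≤ min 1 (W g + W h))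


/-- Barycentric refinement for paracompact Hausdorff spaces: given an open cover `u`,
there is an open cover `v` (indexed by points) such that each point-star of `v`
is contained in some member of `u`. -/
theorem bk_barycentric {X : Type*} [TopologicalSpace X] [ParacompactSpace X] [T2Space X]
    {ι : Type*} (u : ι → Set X) (uo : ∀ i, IsOpen (u i)) (uc : ⋃ i, u i = univ) :
    ∃ v : X → Set X, (∀ y, IsOpen (v y)) ∧ (∀ y, y ∈ v y) ∧
      ∀ x : X, ∃ i, ∀ y, x ∈ v y → v y ⊆ u i := by
  obtain ⟨w, wo, wc, wlf, wsub⟩ := precise_refinement u uo uc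
  obtain ⟨t, tc, topen, tcl⟩ := exists_subset_iUnion_closure_subset isClosed_univ wo
    (fun x _ => wlf.point_finite x) (by rw [wc])
  have tlf : LocallyFinite t := wlf.subset fun i => (subset_closure.trans (tcl i))
  have tclf : LocallyFinite fun i => closure (t i) := tlf.closure
  -- choose for each y an open neighborhood meeting only finitely many closures
  have hN : ∀ y : X, ∃ N : Set X, IsOpen N ∧ y ∈ N ∧
      {i | (closure (t i) ∩ N).Nonempty}.Finite := by
    intro y
    obtain ⟨N, hNmem, hNfin⟩ := tclf y
    exact ⟨interior N, isOpen_interior, mem_interior_iff_mem_nhds.2 hNmem,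
      hNfin.subset fun i hi => hi.mono (inter_subset_inter_right _ interior_subset)⟩
  choose N Nopen Nmem Nfin using hN
  classical
  set v : X → Set X := fun y =>
    N y ∩ (⋂ i ∈ {i | y ∈ closure (t i)}, w i) ∩
      (⋂ i ∈ {i | (closure (t i) ∩ N y).Nonempty ∧ y ∉ closure (t i)}, (closure (t i))ᶜ)
    with hv
  have hIfin : ∀ y, {i | y ∈ closure (t i)}.Finite := fun y =>
    (Nfin y).subset fun i hi => ⟨y, hi, Nmem y⟩
  have hKfin : ∀ y, {i | (closure (t i) ∩ N y).Nonempty ∧ y ∉ closure (t i)}.Finite :=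
    fun y => (Nfin y).subset fun i hi => hi.1
  have vopen : ∀ y, IsOpen (v y) := by
    intro y
    refine (((Nopen y).inter ((hIfin y).isOpen_biInter fun i _ => wo i)).inter
      ((hKfin y).isOpen_biInter fun i _ => (isClosed_closure).isOpen_compl))
  have vmem : ∀ y, y ∈ v y := by
    intro y
    refine ⟨⟨Nmem y, ?_⟩, ?_⟩
    · exact mem_biInter fun i hi => tcl i hi
    · exact mem_biInter fun i hi => hi.2
  refine ⟨v, vopen, vmem, ?_⟩
  intro x
  have hx : x ∈ ⋃ i, t i := tc (mem_univ x)
  obtain ⟨i₀, hxi₀⟩ := mem_iUnion.1 hx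
  refine ⟨i₀, fun y hxy => ?_⟩
  -- show v y ⊆ u i₀
  have hyN : x ∈ N y := hxy.1.1
  have hne : (closure (t i₀) ∩ N y).Nonempty := ⟨x, subset_closure hxi₀, hyN⟩
  have hycl : y ∈ closure (t i₀) := by
    by_contra hy
    have : x ∈ (closure (t i₀))ᶜ := by
      have := hxy.2
      exact Set.mem_iInter₂.mp this i₀ ⟨hne, hy⟩
    exact this (subset_closure hxi₀)
  have : v y ⊆ w i₀ := fun z hz => (Set.mem_iInter₂.mp hz.1.2) i₀ hycl
  exact this.trans (wsub i₀)
namespace BKaux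
open Set Topology List
variable {G : Type*} (S : Groupoidal G)

lemma unit_tgt {x : G} (h : S.src x = x) : S.tgt x = x := by
  have := S.tgt_of_src x; rwa [h] at this

lemma unit_inv {x : G} (h : S.src x = x) : S.inv x = x := by
  calc S.inv x = S.comp (S.inv x) (S.src (S.inv x)) := (S.comp_src _).symm
    _ = S.comp (S.inv x) x := by rw [S.src_inv, unit_tgt S h]
    _ = S.src x := S.inv_comp_self x
    _ = x := h

lemma src_mem_units (g : G) : S.src g ∈ S.units := S.src_src g
lemma tgt_mem_units (g : G) : S.tgt g ∈ S.units := S.src_of_tgt g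

lemma inv_inv (g : G) : S.inv (S.inv g) = g := by
  have h1 : S.comp (S.comp (S.inv (S.inv g)) (S.inv g)) g = g := by
    rw [S.inv_comp_self (S.inv g), S.src_inv, S.tgt_comp_self]
  have h2 : S.comp (S.comp (S.inv (S.inv g)) (S.inv g)) g
      = S.comp (S.inv (S.inv g)) (S.comp (S.inv g) g) := by
    exact S.comp_assoc _ _ _ (by rw [S.src_inv, S.tgt_inv]) (S.src_inv g)
  have h3 : S.src (S.inv (S.inv g)) = S.src g := by rw [S.src_inv, S.tgt_inv]
  rw [h2, S.inv_comp_self, ← h3, S.comp_src] at h1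
  exact h1

lemma left_inv_unique {x m : G} (h1 : S.src x = S.tgt m) (h2 : S.comp x m = S.src m) :
    x = S.inv m := by
  calc x = S.comp x (S.src x) := (S.comp_src x).symm
    _ = S.comp x (S.comp m (S.inv m)) := by rw [h1, S.comp_inv_self]
    _ = S.comp (S.comp x m) (S.inv m) := (S.comp_assoc _ _ _ h1 (S.tgt_inv m).symm).symm
    _ = S.comp (S.tgt (S.inv m)) (S.inv m) := by rw [h2, S.tgt_inv]
    _ = S.inv m := S.tgt_comp_self _

lemma inv_comp {g h : G} (hc : S.Composable g h) :
    S.inv (S.comp g h) = S.comp (S.inv h) (S.inv g) := by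
  have hc' : S.Composable (S.inv h) (S.inv g) := by
    unfold Groupoidal.Composable at hc ⊢
    rw [S.src_inv, S.tgt_inv, hc]
  symm
  apply left_inv_unique S
  · rw [S.src_comp _ _ hc', S.src_inv, S.tgt_comp _ _ hc]
  · have e1 : S.comp (S.inv g) (S.comp g h) = h := by
      rw [← S.comp_assoc (S.inv g) g h (S.src_inv g) hc, S.inv_comp_self, hc]
      exact S.tgt_comp_self h
    have e2 : S.comp (S.comp (S.inv h) (S.inv g)) (S.comp g h)
        = S.comp (S.inv h) (S.comp (S.inv g) (S.comp g h)) := by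
      apply S.comp_assoc _ _ _ hc'
      rw [S.src_inv, S.tgt_comp _ _ hc]
    rw [e2, e1, S.inv_comp_self, S.src_comp _ _ hc]

lemma comp_inv_cancel_right {g h : G} (hc : S.Composable g h) :
    S.comp (S.comp g h) (S.inv h) = g := by
  have : S.comp (S.comp g h) (S.inv h) = S.comp g (S.comp h (S.inv h)) :=
    S.comp_assoc _ _ _ hc (S.tgt_inv h).symm
  rw [this, S.comp_inv_self, ← hc, S.comp_src]

set_option linter.unusedSectionVars false

section Top
variable [TopologicalSpace G]

/-- Continuity of pointwise composition of two continuous, everywhere-composable maps. -/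
lemma cont_comp₂ (hTop : S.IsTopological) {Y : Type*} [TopologicalSpace Y]
    {α β : Y → G} (hα : Continuous α) (hβ : Continuous β)
    (h : ∀ y, S.Composable (α y) (β y)) :
    Continuous fun y => S.comp (α y) (β y) := by
  have : (fun y => S.comp (α y) (β y)) =
      (fun p : {p : G × G // S.Composable p.1 p.2} => S.comp p.1.1 p.1.2) ∘
        (fun y => (⟨(α y, β y), h y⟩ : {p : G × G // S.Composable p.1 p.2})) := rfl
  rw [this]
  exact hTop.continuous_comp.comp (Continuous.subtype_mk (hα.prodMk hβ) _)

lemma inv_preimage_eq (A : Set G) : S.setInv A = S.inv ⁻¹' A := by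
  ext g
  constructor
  · rintro ⟨a, ha, rfl⟩; simpa [inv_inv S a] using ha
  · intro hg; exact ⟨S.inv g, hg, inv_inv S g⟩

lemma inv_open (hTop : S.IsTopological) {A : Set G} (hA : IsOpen A) :
    IsOpen (S.setInv A) := by
  rw [inv_preimage_eq]
  exact hA.preimage hTop.continuous_inv

/-- In an open topological groupoid, the product of two open sets is open. -/
lemma mul_open (hTop : S.IsTopological) (hOpen : IsOpenMap S.src)
    {A B : Set G} (hA : IsOpen A) (hB : IsOpen B) : IsOpen (S.setMul A B) := by
  rw [isOpen_iff_forall_mem_open]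
  rintro k₀ ⟨g₀, hg₀, h₀, hh₀, hc₀, rfl⟩
  -- continuous map (k,h) ↦ k · h⁻¹ on the pullback {σ k = σ h}
  set D := {p : G × G // S.src p.1 = S.src p.2} with hD
  have hcomp : ∀ p : D, S.Composable p.1.1 (S.inv p.1.2) := by
    rintro ⟨⟨k, h⟩, hp⟩
    unfold Groupoidal.Composable
    rw [S.tgt_inv]; exact hp
  have hF : Continuous fun p : D => S.comp p.1.1 (S.inv p.1.2) := by
    apply cont_comp₂ S hTop
    · exact continuous_fst.comp continuous_subtype_val
    · exact hTop.continuous_inv.comp (continuous_snd.comp continuous_subtype_val)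
    · exact hcomp
  have hmem : S.src (S.comp g₀ h₀) = S.src h₀ := S.src_comp _ _ hc₀
  set p₀ : D := ⟨(S.comp g₀ h₀, h₀), hmem⟩
  have hval : S.comp p₀.1.1 (S.inv p₀.1.2) = g₀ := comp_inv_cancel_right S hc₀
  have hpre : IsOpen ((fun p : D => S.comp p.1.1 (S.inv p.1.2)) ⁻¹' A) := hF.isOpen_preimage A hA
  rw [isOpen_induced_iff] at hpre
  obtain ⟨N, hN, hNeq⟩ := hpre
  have hp₀N : p₀.1 ∈ N := by
    have : p₀ ∈ (Subtype.val ⁻¹' N : Set D) := by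
      rw [hNeq]; show S.comp p₀.1.1 (S.inv p₀.1.2) ∈ A; rw [hval]; exact hg₀
    exact this
  rw [isOpen_prod_iff] at hN
  obtain ⟨N₁, N₂, hN₁, hN₂, hk₀, hh₀', hsub⟩ := hN p₀.1.1 p₀.1.2 hp₀N
  refine ⟨N₁ ∩ S.src ⁻¹' (S.src '' (N₂ ∩ B)), ?_, ?_, ?_⟩
  · rintro k ⟨hk1, hk2⟩
    obtain ⟨h, hh, hsrc⟩ := hk2
    have hkD : S.src k = S.src h := hsrc.symm
    have hmemA : S.comp k (S.inv h) ∈ A := by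
      have : (⟨(k, h), hkD⟩ : D) ∈ (Subtype.val ⁻¹' N : Set D) :=
        hsub (Set.mk_mem_prod hk1 hh.1)
      rw [hNeq] at this; exact this
    refine ⟨S.comp k (S.inv h), hmemA, h, hh.2, ?_, ?_⟩
    · show S.src _ = S.tgt h
      rw [S.src_comp _ _ (by show S.src k = S.tgt (S.inv h); rw [S.tgt_inv]; exact hkD),
        S.src_inv]
    · have hc1 : S.Composable k (S.inv h) := by
        show S.src k = S.tgt (S.inv h); rw [S.tgt_inv]; exact hkD
      have : S.comp (S.comp k (S.inv h)) h = S.comp k (S.comp (S.inv h) h) := by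
        apply S.comp_assoc _ _ _ hc1 (S.src_inv h)
      rw [this, S.inv_comp_self, ← hkD, S.comp_src]
  · exact hN₁.inter ((hOpen _ (hN₂.inter hB)).preimage hTop.continuous_src)
  · refine ⟨hk₀, ?_⟩
    exact ⟨h₀, ⟨hh₀', hh₀⟩, hmem.symm⟩

end Top
end BKaux
namespace BKaux
open Set Topology List
variable {G : Type*} (S : Groupoidal G)
set_option linter.unusedSectionVars false

section Shrink
variable [TopologicalSpace G]

/-- `Good O P`: fourfold alternating products from `P` land in `O`. -/
def Good (O P : Set G) : Prop :=
  ∀ a b c d : G, a ∈ P → b ∈ P → c ∈ P → d ∈ P →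
    S.tgt a = S.tgt b → S.src b = S.src c → S.tgt c = S.tgt d →
      S.comp (S.comp (S.comp (S.inv a) b) (S.inv c)) d ∈ O

lemma exists_good (hTop : S.IsTopological) {V O : Set G} (hVunital : S.IsUnital V)
    (hO : IsOpen O) (hVO : S.units ∩ V ⊆ O) {v : G} (hv : v ∈ V) :
    ∃ P : Set G, IsOpen P ∧ v ∈ P ∧ Good S O P := by
  set Y := {q : (G × G) × G × G // S.tgt q.1.1 = S.tgt q.1.2 ∧
    S.src q.1.2 = S.src q.2.1 ∧ S.tgt q.2.1 = S.tgt q.2.2} with hY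
  have ha : Continuous fun y : Y => y.1.1.1 :=
    continuous_fst.comp (continuous_fst.comp continuous_subtype_val)
  have hb : Continuous fun y : Y => y.1.1.2 :=
    continuous_snd.comp (continuous_fst.comp continuous_subtype_val)
  have hcc : Continuous fun y : Y => y.1.2.1 :=
    continuous_fst.comp (continuous_snd.comp continuous_subtype_val)
  have hd : Continuous fun y : Y => y.1.2.2 :=
    continuous_snd.comp (continuous_snd.comp continuous_subtype_val)
  have hm1c : ∀ y : Y, S.Composable (S.inv y.1.1.1) y.1.1.2 := by
    intro y; show S.src _ = S.tgt _; rw [S.src_inv]; exact y.2.1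
  have hm1 : Continuous fun y : Y => S.comp (S.inv y.1.1.1) y.1.1.2 :=
    cont_comp₂ S hTop (hTop.continuous_inv.comp ha) hb hm1c
  have hm2c : ∀ y : Y, S.Composable (S.comp (S.inv y.1.1.1) y.1.1.2) (S.inv y.1.2.1) := by
    intro y; show S.src _ = S.tgt _
    rw [S.src_comp _ _ (hm1c y), S.tgt_inv]; exact y.2.2.1
  have hm2 : Continuous fun y : Y =>
      S.comp (S.comp (S.inv y.1.1.1) y.1.1.2) (S.inv y.1.2.1) :=
    cont_comp₂ S hTop hm1 (hTop.continuous_inv.comp hcc) hm2c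
  have hm3c : ∀ y : Y, S.Composable
      (S.comp (S.comp (S.inv y.1.1.1) y.1.1.2) (S.inv y.1.2.1)) y.1.2.2 := by
    intro y; show S.src _ = S.tgt _
    rw [S.src_comp _ _ (hm2c y), S.src_inv]; exact y.2.2.2
  have hm3 : Continuous fun y : Y =>
      S.comp (S.comp (S.comp (S.inv y.1.1.1) y.1.1.2) (S.inv y.1.2.1)) y.1.2.2 :=
    cont_comp₂ S hTop hm2 hd hm3c
  set y₀ : Y := ⟨((v, v), (v, v)), rfl, rfl, rfl⟩ with hy₀
  have hval : S.comp (S.comp (S.comp (S.inv v) v) (S.inv v)) v = S.src v := by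
    rw [S.inv_comp_self]
    have h1 : S.comp (S.src v) (S.inv v) = S.inv v := by
      rw [← S.tgt_inv v]; exact S.tgt_comp_self _
    rw [h1, S.inv_comp_self]
  have hy₀O : (fun y : Y =>
      S.comp (S.comp (S.comp (S.inv y.1.1.1) y.1.1.2) (S.inv y.1.2.1)) y.1.2.2) y₀ ∈ O := by
    show S.comp (S.comp (S.comp (S.inv v) v) (S.inv v)) v ∈ O
    rw [hval]
    exact hVO ⟨S.src_src v, hVunital.1 ⟨v, hv, rfl⟩⟩
  have hpre := (hm3.isOpen_preimage O hO)
  rw [isOpen_induced_iff] at hpre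
  obtain ⟨N, hN, hNeq⟩ := hpre
  have hy₀N : ((v, v), (v, v)) ∈ N := by
    have : y₀ ∈ (Subtype.val ⁻¹' N : Set Y) := by rw [hNeq]; exact hy₀O
    exact this
  rw [isOpen_prod_iff] at hN
  obtain ⟨N₁, N₂, hN₁, hN₂, hvN₁, hvN₂, hsub⟩ := hN (v, v) (v, v) hy₀N
  rw [isOpen_prod_iff] at hN₁ hN₂
  obtain ⟨P₁, P₂, hP₁, hP₂, hv₁, hv₂, hsub₁⟩ := hN₁ v v hvN₁
  obtain ⟨P₃, P₄, hP₃, hP₄, hv₃, hv₄, hsub₂⟩ := hN₂ v v hvN₂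
  refine ⟨P₁ ∩ P₂ ∩ P₃ ∩ P₄, ((hP₁.inter hP₂).inter hP₃).inter hP₄,
    ⟨⟨⟨hv₁, hv₂⟩, hv₃⟩, hv₄⟩, ?_⟩
  intro a b c d hA hB hC hD h1 h2 h3
  have hq : (((a, b), (c, d)) : (G × G) × G × G) ∈ N :=
    hsub (Set.mk_mem_prod (hsub₁ (Set.mk_mem_prod hA.1.1.1 hB.1.1.2))
      (hsub₂ (Set.mk_mem_prod hC.1.2 hD.2)))
  have : (⟨((a, b), (c, d)), h1, h2, h3⟩ : Y) ∈ (Subtype.val ⁻¹' N : Set Y) := hq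
  rw [hNeq] at this
  exact this

lemma shrink (hTop : S.IsTopological) (hOpen : IsOpenMap S.src)
    {V : Set G} (hVopen : IsOpen V) (hVunital : S.IsUnital V)
    (hT2 : T2Space ↥V) (hPara : ParacompactSpace ↥V)
    {O : Set G} (hO : IsOpen O) (hVO : S.units ∩ V ⊆ O) :
    ∃ Z : Set G, IsOpen Z ∧ S.units ∩ V ⊆ Z ∧
      (∀ g ∈ Z, S.src g ∈ V ∧ S.tgt g ∈ V) ∧
      (∀ g h, g ∈ Z → h ∈ Z → S.Composable g h → S.comp g h ∈ O) := by
  classical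
  set ι := {P : Set G // IsOpen P ∧ Good S O P} with hι
  set u : ι → Set ↥V := fun i => Subtype.val ⁻¹' i.1 with hu
  have uo : ∀ i, IsOpen (u i) := fun i => i.2.1.preimage continuous_subtype_val
  have uc : ⋃ i, u i = univ := by
    rw [eq_univ_iff_forall]
    intro x
    obtain ⟨P, hPo, hxP, hPg⟩ := exists_good S hTop hVunital hO hVO x.2
    exact mem_iUnion.2 ⟨⟨P, hPo, hPg⟩, hxP⟩
  obtain ⟨v, vopen, vmem, vbary⟩ := bk_barycentric u uo uc
  set B : ↥V → Set G := fun y => Subtype.val '' v y with hB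
  have Bopen : ∀ y, IsOpen (B y) := fun y => hVopen.isOpenMap_subtype_val _ (vopen y)
  have BsubV : ∀ y, B y ⊆ V := fun y => by rintro _ ⟨z, _, rfl⟩; exact z.2
  have Bmem : ∀ z : ↥V, (z : G) ∈ B z := fun z => ⟨z, vmem z, rfl⟩
  set C : ↥V → Set G := fun y => B y ∩ S.src ⁻¹' (B y) with hC
  set Z : Set G := ⋃ y, S.setMul (S.setInv (C y)) (C y) with hZ
  have Copen : ∀ y, IsOpen (C y) := fun y =>
    (Bopen y).inter ((Bopen y).preimage hTop.continuous_src)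
  refine ⟨Z, ?_, ?_, ?_, ?_⟩
  · exact isOpen_iUnion fun y =>
      mul_open S hTop hOpen (inv_open S hTop (Copen y)) (Copen y)
  · rintro x ⟨hxu, hxV⟩
    have hxB : x ∈ B ⟨x, hxV⟩ := Bmem _
    have hxC : x ∈ C ⟨x, hxV⟩ := ⟨hxB, by rw [mem_preimage, hxu]; exact hxB⟩
    refine mem_iUnion.2 ⟨⟨x, hxV⟩, S.inv x, ⟨x, hxC, rfl⟩, x, hxC, ?_, ?_⟩
    · show S.src _ = S.tgt _
      rw [S.src_inv]
    · rw [S.inv_comp_self, hxu]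
  · intro g hg
    obtain ⟨y, ga, ⟨a, haC, rfl⟩, b, hbC, hcab, rfl⟩ := mem_iUnion.1 hg
    constructor
    · rw [S.src_comp _ _ hcab]; exact BsubV y hbC.2
    · rw [S.tgt_comp _ _ hcab, S.tgt_inv]; exact BsubV y haC.2
  · intro g h hg hh hgh
    obtain ⟨y₁, ga, ⟨a, haC, rfl⟩, b, hbC, hcab, hgeq⟩ := mem_iUnion.1 hg
    obtain ⟨y₂, gc, ⟨c, hcC, rfl⟩, d, hdC, hccd, hheq⟩ := mem_iUnion.1 hh
    have hsg : S.src g = S.src b := by rw [hgeq, S.src_comp _ _ hcab]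
    have hth : S.tgt h = S.src c := by rw [hheq, S.tgt_comp _ _ hccd, S.tgt_inv]
    have hzz : S.src b = S.src c := by rw [← hsg, hgh, hth]
    have hzV : S.src b ∈ V := BsubV y₁ hbC.2
    set z : ↥V := ⟨S.src b, hzV⟩ with hz
    obtain ⟨i, hi⟩ := vbary z
    have hby : ∀ y : ↥V, S.src b ∈ B y → B y ⊆ i.1 := by
      intro y hmem
      obtain ⟨w, hw, hwv⟩ := hmem
      have : z ∈ v y := by
        have : w = z := Subtype.ext hwv
        rwa [this] at hw
      intro x hx
      obtain ⟨x', hx', rfl⟩ := hx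
      exact hi y this hx'
    have hB1 : B y₁ ⊆ i.1 := hby y₁ hbC.2
    have hB2 : B y₂ ⊆ i.1 := hby y₂ (by rw [hzz]; exact hcC.2)
    have hta : S.tgt a = S.tgt b := by
      have := hcab; unfold Groupoidal.Composable at this; rwa [S.src_inv] at this
    have htc : S.tgt c = S.tgt d := by
      have := hccd; unfold Groupoidal.Composable at this; rwa [S.src_inv] at this
    have hgood := i.2.2 a b c d (hB1 haC.1) (hB1 hbC.1) (hB2 hcC.1) (hB2 hdC.1)
      hta hzz htc
    have hc1 : S.src g = S.tgt (S.inv c) := by rw [S.tgt_inv, hsg]; exact hzz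
    have hc2 : S.src (S.inv c) = S.tgt d := by rw [S.src_inv]; exact htc
    have hE : S.comp g h = S.comp (S.comp (S.comp (S.inv a) b) (S.inv c)) d := by
      rw [hheq, ← S.comp_assoc g (S.inv c) d hc1 hc2, hgeq]
    rw [hE]; exact hgood
end Shrink
end BKaux
namespace BKaux
open Set Topology List
variable {G : Type*} (S : Groupoidal G)
set_option linter.unusedSectionVars false

/-- Recursive choice of a sequence. -/
lemma exists_seq {α : Type*} {P : ℕ → α → Prop} {R : ℕ → α → α → Prop}
    (h0 : ∃ a, P 0 a) (hstep : ∀ n a, P n a → ∃ b, P (n + 1) b ∧ R n b a) :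
    ∃ f : ℕ → α, (∀ n, P n (f n)) ∧ ∀ n, R n (f (n + 1)) (f n) := by
  choose F hF1 hF2 using hstep
  let g : (n : ℕ) → {a // P n a} := fun n =>
    Nat.rec ⟨Classical.choose h0, Classical.choose_spec h0⟩
      (fun n p => ⟨F n p.1 p.2, hF1 n p.1 p.2⟩) n
  exact ⟨fun n => (g n).1, fun n => (g n).2, fun n => hF2 n (g n).1 (g n).2⟩

/-- Product of a nonempty list `a :: t`. -/
def prodL (a : G) (t : List G) : G := t.foldl S.comp a

lemma chain_cons_comp {a b : G} {t : List G}
    (h : List.Chain' S.Composable (a :: b :: t)) :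
    List.Chain' S.Composable (S.comp a b :: t) := by
  have hab : S.Composable a b := List.isChain_cons_cons.1 h |>.1
  have ht := List.isChain_cons_cons.1 h |>.2
  rw [List.isChain_cons] at ht; rw [List.Chain', List.isChain_cons]
  refine ⟨fun y hy => ?_, ht.2⟩
  have := ht.1 y hy
  show S.src _ = S.tgt _
  rw [S.src_comp _ _ hab]
  exact this

lemma foldl_comp_assoc : ∀ (u : List G) (b P : G), S.Composable P b →
    List.Chain' S.Composable (b :: u) →
    u.foldl S.comp (S.comp P b) = S.comp P (u.foldl S.comp b) := by
  intro u
  induction u with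
  | nil => intro b P _ _; rfl
  | cons c u' ih =>
    intro b P hPb hch
    have hbc : S.Composable b c := List.isChain_cons_cons.1 hch |>.1
    have h1 : S.comp (S.comp P b) c = S.comp P (S.comp b c) := S.comp_assoc P b c hPb hbc
    show u'.foldl S.comp (S.comp (S.comp P b) c) = S.comp P (u'.foldl S.comp (S.comp b c))
    rw [h1]
    apply ih (S.comp b c) P
    · show S.src P = S.tgt _
      rw [S.tgt_comp _ _ hbc]; exact hPb
    · exact chain_cons_comp S hch

lemma tgt_prodL : ∀ (t : List G) (a : G), List.Chain' S.Composable (a :: t) →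
    S.tgt (prodL S a t) = S.tgt a := by
  intro t
  induction t with
  | nil => intro a _; rfl
  | cons b t' ih =>
    intro a hch
    have hab : S.Composable a b := List.isChain_cons_cons.1 hch |>.1
    show S.tgt (prodL S (S.comp a b) t') = S.tgt a
    rw [ih _ (chain_cons_comp S hch), S.tgt_comp _ _ hab]

lemma src_prodL : ∀ (t : List G) (a : G), List.Chain' S.Composable (a :: t) →
    S.src (prodL S a t) = S.src (t.getLastD a) := by
  intro t
  induction t with
  | nil => intro a _; rfl
  | cons b t' ih =>
    intro a hch
    have hab : S.Composable a b := List.isChain_cons_cons.1 hch |>.1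
    show S.src (prodL S (S.comp a b) t') = S.src ((b :: t').getLastD a)
    rw [ih _ (chain_cons_comp S hch), List.getLastD_cons]
    cases t' with
    | nil => exact S.src_comp a b hab
    | cons c t'' => rw [List.getLastD_cons, List.getLastD_cons]

lemma getLast?_cons_eq : ∀ (t : List G) (a : G), (a :: t).getLast? = some (t.getLastD a) := by
  intro t
  induction t with
  | nil => intro a; rfl
  | cons b t' ih =>
    intro a
    rw [List.getLast?_cons_cons, ih b, List.getLastD_cons]

lemma prodL_append {a g : G} {t l₂ : List G}
    (h : List.Chain' S.Composable (a :: (t ++ g :: l₂))) :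
    prodL S a (t ++ g :: l₂) = S.comp (prodL S a t) (prodL S g l₂) := by
  have h' : List.Chain' S.Composable ((a :: t) ++ (g :: l₂)) := h
  rw [List.Chain', List.isChain_append] at h'
  obtain ⟨h₁, h₂, h₃⟩ := h'
  have hj : S.Composable (t.getLastD a) g := by
    apply h₃
    · rw [getLast?_cons_eq]; rfl
    · rfl
  have hPg : S.Composable (prodL S a t) g := by
    show S.src _ = S.tgt g
    rw [src_prodL S t a h₁]; exact hj
  show (t ++ g :: l₂).foldl S.comp a = _
  rw [List.foldl_append]
  exact foldl_comp_assoc S l₂ g (prodL S a t) hPg h₂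

/-- Splitting a list at a point where the prefix sum reaches `b`. -/
lemma splitList (f : G → ℝ) (hf : ∀ x, 0 ≤ f x) : ∀ (l : List G), l ≠ [] → ∀ b : ℝ, 0 ≤ b →
    ∃ l₁ g l₂, l = l₁ ++ g :: l₂ ∧ (l₁.map f).sum ≤ b ∧
      (b ≤ (l₁.map f).sum + f g ∨ l₂ = []) := by
  intro l
  induction l with
  | nil => intro h; exact absurd rfl h
  | cons a t ih =>
    intro _ b hb
    by_cases hfa : b ≤ f a
    · exact ⟨[], a, t, rfl, by simpa using hb, Or.inl (by simpa using hfa)⟩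
    · push_neg at hfa
      cases t with
      | nil => exact ⟨[], a, [], rfl, by simpa using hb, Or.inr rfl⟩
      | cons c u =>
        obtain ⟨l₁, g, l₂, heq, h1, h2⟩ := ih (by simp) (b - f a) (by linarith)
        refine ⟨a :: l₁, g, l₂, by rw [heq]; rfl, ?_, ?_⟩
        · simp only [List.map_cons, List.sum_cons]; linarith
        · rcases h2 with h2 | h2
          · left; simp only [List.map_cons, List.sum_cons]; linarith
          · right; exact h2

end BKaux
namespace BKaux
open Set Topology List
variable {G : Type*} (S : Groupoidal G)
set_option linter.unusedSectionVars false

lemma chain_cons_uncomp {a b : G} {t : List G} (hab : S.Composable a b)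
    (h : List.Chain' S.Composable (S.comp a b :: t)) :
    List.Chain' S.Composable (a :: b :: t) := by
  rw [List.Chain', List.isChain_cons] at h
  rw [List.Chain', List.isChain_cons_cons]
  refine ⟨hab, ?_⟩
  rw [List.isChain_cons]
  refine ⟨fun y hy => ?_, h.2⟩
  have h2 := h.1 y hy
  unfold Groupoidal.Composable at h2 ⊢
  rwa [S.src_comp _ _ hab] at h2

lemma exists_forall₂ {α β : Type*} {p : α → β → Prop} :
    ∀ l : List α, (∀ x ∈ l, ∃ y, p x y) → ∃ ms : List β, List.Forall₂ p l ms := by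
  intro l
  induction l with
  | nil => exact fun _ => ⟨[], List.Forall₂.nil⟩
  | cons a t ih =>
    intro h
    obtain ⟨y, hy⟩ := h a (List.mem_cons_self)
    obtain ⟨ms, hms⟩ := ih fun x hx => h x (List.mem_cons_of_mem _ hx)
    exact ⟨y :: ms, List.Forall₂.cons hy hms⟩

section Top
variable [TopologicalSpace G]

/-- Iterated set product. -/
def sP (A : Set G) (Ls : List (Set G)) : Set G := Ls.foldl S.setMul A

lemma sP_open (hTop : S.IsTopological) (hOpen : IsOpenMap S.src) :
    ∀ (Ls : List (Set G)) (A : Set G), IsOpen A → (∀ B ∈ Ls, IsOpen B) →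
      IsOpen (sP S A Ls) := by
  intro Ls
  induction Ls with
  | nil => exact fun A hA _ => hA
  | cons B Ls' ih =>
    intro A hA hB
    exact ih _ (mul_open S hTop hOpen hA (hB B (List.mem_cons_self)))
      fun C hC => hB C (List.mem_cons_of_mem _ hC)

lemma mem_sP : ∀ {t : List G} {Ls : List (Set G)}, List.Forall₂ (· ∈ ·) t Ls →
    ∀ {a : G} {A : Set G}, a ∈ A → List.Chain' S.Composable (a :: t) →
    prodL S a t ∈ sP S A Ls := by
  intro t Ls hF
  induction hF with
  | nil => exact fun ha _ => ha
  | @cons b B t' Ls' hb _ ih =>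
    intro a A ha hch
    have hab : S.Composable a b := List.isChain_cons_cons.1 hch |>.1
    show prodL S (S.comp a b) t' ∈ sP S (S.setMul A B) Ls'
    exact ih ⟨a, ha, b, hb, hab, rfl⟩ (chain_cons_comp S hch)

lemma sP_sub : ∀ (Ls : List (Set G)) (A : Set G) (k : G), k ∈ sP S A Ls →
    ∃ a t, a ∈ A ∧ List.Forall₂ (· ∈ ·) t Ls ∧ List.Chain' S.Composable (a :: t) ∧
      prodL S a t = k := by
  intro Ls
  induction Ls with
  | nil => exact fun A k hk => ⟨k, [], hk, List.Forall₂.nil, List.isChain_singleton k, rfl⟩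
  | cons B Ls' ih =>
    intro A k hk
    obtain ⟨a', t', ha', hF', hch', hprod⟩ := ih (S.setMul A B) k hk
    obtain ⟨a, ha, b, hb, hab, rfl⟩ := ha'
    refine ⟨a, b :: t', ha, List.Forall₂.cons hb hF', chain_cons_uncomp S hab hch', hprod⟩

end Top
end BKaux

open List in
/-- **Birkhoff–Kakutani metrization for locally paracompact open topological
groupoids.** -/
theorem birkhoff_kakutani_groupoid {G : Type*} [TopologicalSpace G]
    (S : Groupoidal G) (hTop : S.IsTopological) (hOpen : IsOpenMap S.src)
    (U : G → ℝ) (hU01 : ∀ g, U g ∈ Set.Icc (0 : ℝ) 1) (hUopen : GreyOpen U)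
    (V : Set G) (hVopen : IsOpen V) (hVunital : S.IsUnital V)
    (hT2 : T2Space ↥V) (hPara : ParacompactSpace ↥V)
    (hVU : S.units ∩ V ⊆ {g | U g = 0}) :
    ∃ W : G → ℝ, (∀ g, W g ∈ Set.Icc (0 : ℝ) 1) ∧ GreyOpen W ∧
      S.IsStrictGreySubgroupoid W ∧ (∀ g, U g ≤ W g) ∧
      S.units ∩ {x | W x = 0} = S.units ∩ V := by
  classical
  have hcomp_unit_right : ∀ g : G, S.Composable g (S.src g) := fun g => (S.tgt_of_src g).symm
  have absorb : ∀ Z O' : Set G, S.units ∩ V ⊆ Z →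
      (∀ g ∈ Z, S.src g ∈ V ∧ S.tgt g ∈ V) →
      (∀ g h, g ∈ Z → h ∈ Z → S.Composable g h → S.comp g h ∈ O') → Z ⊆ O' := by
    intro Z O' hu hs hm g hg
    have hσ : S.src g ∈ Z := hu ⟨S.src_src g, (hs g hg).1⟩
    have := hm g (S.src g) hg hσ (hcomp_unit_right g)
    rwa [S.comp_src] at this
  have hUsub : ∀ c : ℝ, 0 < c → S.units ∩ V ⊆ {g | U g < c} := by
    intro c hc x hx
    have h0 := hVU hx
    simp only [Set.mem_setOf_eq] at h0 ⊢
    rw [h0]; exact hc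
  have hhalfpos : ∀ n : ℕ, (0:ℝ) < (2⁻¹:ℝ)^n := fun n => pow_pos (by norm_num) n
  -- the shrinking sequence
  set P : ℕ → Set G → Prop := fun n Z =>
    IsOpen Z ∧ S.units ∩ V ⊆ Z ∧ (∀ g ∈ Z, S.src g ∈ V ∧ S.tgt g ∈ V) ∧
      ∀ g ∈ Z, U g < (2⁻¹ : ℝ)^(n+1) with hPdef
  set R : ℕ → Set G → Set G → Prop := fun _ Z' Z =>
    ∀ g h k, g ∈ Z' → h ∈ Z' → k ∈ Z' → S.Composable g h → S.Composable h k →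
      S.comp (S.comp g h) k ∈ Z with hRdef
  have base : ∃ Z0, P 0 Z0 := by
    obtain ⟨Z0, h1, h2, h3, h4⟩ := BKaux.shrink S hTop hOpen hVopen hVunital hT2 hPara
      (hUopen ((2⁻¹:ℝ)^(0+1))) (hUsub _ (hhalfpos 1))
    exact ⟨Z0, h1, h2, h3, fun g hg => absorb Z0 _ h2 h3 h4 hg⟩
  have step : ∀ n Z, P n Z → ∃ Z', P (n+1) Z' ∧ R n Z' Z := by
    intro n Z hZ
    obtain ⟨hZo, hZu, hZs, hZU⟩ := hZ
    have hMo : IsOpen (Z ∩ {g | U g < (2⁻¹:ℝ)^(n+2)}) := hZo.inter (hUopen _)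
    have hMu : S.units ∩ V ⊆ Z ∩ {g | U g < (2⁻¹:ℝ)^(n+2)} :=
      Set.subset_inter hZu (hUsub _ (hhalfpos _))
    obtain ⟨Z₁, h1o, h1u, h1s, h1m⟩ :=
      BKaux.shrink S hTop hOpen hVopen hVunital hT2 hPara hMo hMu
    obtain ⟨Z₂, h2o, h2u, h2s, h2m⟩ :=
      BKaux.shrink S hTop hOpen hVopen hVunital hT2 hPara h1o h1u
    have hZ₂1 : Z₂ ⊆ Z₁ := absorb _ _ h2u h2s h2m
    have hZ₁M : Z₁ ⊆ Z ∩ {g | U g < (2⁻¹:ℝ)^(n+2)} := absorb _ _ h1u h1s h1m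
    refine ⟨Z₂, ⟨h2o, h2u, h2s, fun g hg => (hZ₁M (hZ₂1 hg)).2⟩, ?_⟩
    intro g h k hg hh hk hgh hhk
    have hgh1 : S.comp g h ∈ Z₁ := h2m g h hg hh hgh
    have hc2 : S.Composable (S.comp g h) k := by
      show S.src _ = S.tgt k
      rw [S.src_comp _ _ hgh]; exact hhk
    exact (h1m _ _ hgh1 (hZ₂1 hk) hc2).1
  obtain ⟨Z, hP, hR⟩ := BKaux.exists_seq base step
  simp only [hPdef, hRdef] at hP hR
  have hZopen : ∀ n, IsOpen (Z n) := fun n => (hP n).1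
  have hZuV : ∀ n, S.units ∩ V ⊆ Z n := fun n => (hP n).2.1
  have hZs : ∀ n, ∀ g ∈ Z n, S.src g ∈ V ∧ S.tgt g ∈ V := fun n => (hP n).2.2.1
  have hZU : ∀ n, ∀ g ∈ Z n, U g < (2⁻¹:ℝ)^(n+1) := fun n => (hP n).2.2.2
  have hsrcZ : ∀ n g, g ∈ Z n → S.src g ∈ Z n := fun n g hg =>
    hZuV n ⟨S.src_src g, (hZs n g hg).1⟩
  have hpair : ∀ n g h, g ∈ Z (n+1) → h ∈ Z (n+1) → S.Composable g h →
      S.comp g h ∈ Z n := by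
    intro n g h hg hh hc
    have h3 := hR n g h (S.src h) hg hh (hsrcZ _ _ hh) hc (hcomp_unit_right h)
    have h4 : S.src h = S.src (S.comp g h) := (S.src_comp _ _ hc).symm
    rwa [h4, S.comp_src] at h3
  have hmono : ∀ n, Z (n+1) ⊆ Z n := by
    intro n g hg
    have := hpair n g (S.src g) hg (hsrcZ _ _ hg) (hcomp_unit_right g)
    rwa [S.comp_src] at this
  have hanti : ∀ m n, n ≤ m → Z m ⊆ Z n := by
    intro m n h
    induction h with
    | refl => exact fun _ h => h
    | @step m' h ih => exact fun g hg => ih (hmono m' hg)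
  -- the grey gauge f and grey pseudo-length d
  set Sf : G → Set ℝ := fun g => {r : ℝ | r = 1 ∨ ∃ n, g ∈ Z n ∧ r = (2⁻¹ : ℝ)^n} with hSfdef
  set f : G → ℝ := fun g => sInf (Sf g) with hfdef
  have hSfne : ∀ g, (Sf g).Nonempty := fun g => ⟨1, Or.inl rfl⟩
  have hSfbdd : ∀ g, BddBelow (Sf g) := by
    intro g
    refine ⟨0, ?_⟩
    rintro r (rfl | ⟨n, _, rfl⟩)
    · exact zero_le_one
    · exact le_of_lt (hhalfpos n)
  have hf0 : ∀ g, 0 ≤ f g := by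
    intro g
    apply Real.sInf_nonneg
    rintro r (rfl | ⟨n, _, rfl⟩)
    · exact zero_le_one
    · exact le_of_lt (hhalfpos n)
  have hf1 : ∀ g, f g ≤ 1 := fun g => csInf_le (hSfbdd g) (Or.inl rfl)
  have hfle : ∀ (n : ℕ) (g : G), g ∈ Z n → f g ≤ (2⁻¹:ℝ)^n := fun n g hg =>
    csInf_le (hSfbdd g) (Or.inr ⟨n, hg, rfl⟩)
  have hflt : ∀ (n : ℕ) (g : G), f g < (2⁻¹:ℝ)^n → g ∈ Z (n+1) := by
    intro n g hlt
    obtain ⟨r, hr, hrlt⟩ := exists_lt_of_csInf_lt (hSfne g) hlt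
    rcases hr with rfl | ⟨m, hm, rfl⟩
    · exact absurd hrlt (not_lt.2 (pow_le_one₀ (by norm_num) (by norm_num)))
    · have hnm : n < m := by
        rwa [pow_lt_pow_iff_right_of_lt_one₀ (by norm_num) (by norm_num)] at hrlt
      exact hanti m (n+1) hnm hm
  set Sd : G → Set ℝ := fun g => {r : ℝ | ∃ a t, List.Chain' S.Composable (a :: t) ∧
    BKaux.prodL S a t = g ∧ r = ((a :: t).map f).sum} with hSddef
  set d : G → ℝ := fun g => sInf (Sd g) with hddef
  have hSdne : ∀ g, (Sd g).Nonempty := fun g =>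
    ⟨_, g, [], List.isChain_singleton g, rfl, rfl⟩
  have hsum_nonneg : ∀ l : List G, 0 ≤ (l.map f).sum := by
    intro l
    apply List.sum_nonneg
    intro x hx
    obtain ⟨y, _, rfl⟩ := List.mem_map.1 hx
    exact hf0 y
  have hSdbdd : ∀ g, BddBelow (Sd g) := by
    intro g
    refine ⟨0, ?_⟩
    rintro r ⟨a, t, _, _, rfl⟩
    exact hsum_nonneg _
  have hd0 : ∀ g, 0 ≤ d g := by
    intro g
    apply Real.sInf_nonneg
    rintro r ⟨a, t, _, _, rfl⟩
    exact hsum_nonneg _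
  -- the chaining lemma
  have chainLem : ∀ (k : ℕ) (a : G) (t : List G), (a :: t).length ≤ k →
      List.Chain' S.Composable (a :: t) → ∀ n : ℕ, ((a :: t).map f).sum < (2⁻¹:ℝ)^n →
      BKaux.prodL S a t ∈ Z n := by
    intro k
    induction k with
    | zero => intro a t hlen; simp at hlen
    | succ k ih =>
      intro a t hlen hch n hsum
      obtain ⟨l₁, g, l₂, heq, h1, h2⟩ := BKaux.splitList f hf0 (a :: t) (by simp)
        (((a :: t).map f).sum / 2) (by linarith [hsum_nonneg (a :: t)])
      set s := ((a :: t).map f).sum with hsdef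
      have hs0 : 0 ≤ s := hsum_nonneg _
      have hsplit : s = (l₁.map f).sum + (f g + (l₂.map f).sum) := by
        rw [hsdef, heq]
        simp [List.map_append, List.sum_append]
      have hfg : f g ≤ s := by
        have e1 := hsum_nonneg l₁
        have e2 := hsum_nonneg l₂
        linarith
      have hgZ : g ∈ Z (n+1) := hflt n g (lt_of_le_of_lt hfg hsum)
      have hhalf : s / 2 < (2⁻¹:ℝ)^(n+1) := by
        have hpow : (2⁻¹:ℝ)^(n+1) = (2⁻¹:ℝ)^n / 2 := by ring
        rw [hpow]; linarith
      have hl₂sum : (l₂.map f).sum ≤ s / 2 := by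
        rcases h2 with h2 | rfl
        · linarith
        · simpa using (by linarith : (0:ℝ) ≤ s / 2)
      cases l₁ with
      | nil =>
        cases l₂ with
        | nil =>
          injection heq with ha ht
          subst ha; subst ht
          exact hmono n hgZ
        | cons c u =>
          injection heq with ha ht
          subst ha; subst ht
          have hac : S.Composable a c := (List.isChain_cons_cons.1 hch).1
          have hch' : List.Chain' S.Composable (c :: u) := (List.isChain_cons_cons.1 hch).2
          have hQ : BKaux.prodL S c u ∈ Z (n+1) := by
            apply ih c u (by simp at hlen ⊢; omega) hch' (n+1)
            exact lt_of_le_of_lt hl₂sum hhalf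
          have hprodeq : BKaux.prodL S a (c :: u) = S.comp a (BKaux.prodL S c u) :=
            BKaux.foldl_comp_assoc S u c a hac hch'
          rw [hprodeq]
          apply hpair n a _ hgZ hQ
          show S.src a = S.tgt _
          rw [BKaux.tgt_prodL S u c hch']; exact hac
      | cons a₁ u₁ =>
        injection heq with ha ht
        subst ha; subst ht
        have hch2 : List.Chain' S.Composable ((a :: u₁) ++ (g :: l₂)) := hch
        rw [List.Chain', List.isChain_append] at hch2
        obtain ⟨hcl, hcr, hj⟩ := hch2
        have hjunc : S.Composable (u₁.getLastD a) g := by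
          apply hj
          · rw [BKaux.getLast?_cons_eq]; rfl
          · rfl
        have hP1 : BKaux.prodL S a u₁ ∈ Z (n+1) := by
          apply ih a u₁ (by simp at hlen ⊢; omega) hcl (n+1)
          exact lt_of_le_of_lt h1 hhalf
        have hPg : S.Composable (BKaux.prodL S a u₁) g := by
          show S.src _ = S.tgt g
          rw [BKaux.src_prodL S u₁ a hcl]; exact hjunc
        have happ : BKaux.prodL S a (u₁ ++ g :: l₂) =
            S.comp (BKaux.prodL S a u₁) (BKaux.prodL S g l₂) := BKaux.prodL_append S hch
        cases l₂ with
        | nil =>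
          show BKaux.prodL S a (u₁ ++ [g]) ∈ Z n
          rw [happ]
          exact hpair n _ g hP1 hgZ hPg
        | cons c u₂ =>
          have hgc : S.Composable g c := (List.isChain_cons_cons.1 hcr).1
          have hcr' : List.Chain' S.Composable (c :: u₂) := (List.isChain_cons_cons.1 hcr).2
          have hQ : BKaux.prodL S c u₂ ∈ Z (n+1) := by
            apply ih c u₂ (by simp at hlen ⊢; omega) hcr' (n+1)
            exact lt_of_le_of_lt (by simpa using hl₂sum) hhalf
          have hgQ : BKaux.prodL S g (c :: u₂) = S.comp g (BKaux.prodL S c u₂) :=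
            BKaux.foldl_comp_assoc S u₂ c g hgc hcr'
          have hcompgQ : S.Composable g (BKaux.prodL S c u₂) := by
            show S.src g = S.tgt _
            rw [BKaux.tgt_prodL S u₂ c hcr']; exact hgc
          have htrip := hR n (BKaux.prodL S a u₁) g (BKaux.prodL S c u₂) hP1 hgZ hQ hPg hcompgQ
          show BKaux.prodL S a (u₁ ++ g :: c :: u₂) ∈ Z n
          rw [happ, hgQ]
          rwa [S.comp_assoc _ _ _ hPg hcompgQ] at htrip
  have hdlt : ∀ (n : ℕ) (g : G), d g < (2⁻¹:ℝ)^n → g ∈ Z n := by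
    intro n g hlt
    obtain ⟨r, ⟨a, t, hch, hprod, rfl⟩, hrlt⟩ := exists_lt_of_csInf_lt (hSdne g) hlt
    rw [← hprod]
    exact chainLem (a :: t).length a t le_rfl hch n hrlt
  have hdcomp : ∀ g h, S.Composable g h → d (S.comp g h) ≤ d g + d h := by
    intro g h hc
    refine le_of_forall_pos_le_add ?_
    intro ε hε
    have hg2 : d g < d g + ε/2 := by linarith
    have hh2 : d h < d h + ε/2 := by linarith
    obtain ⟨r₁, ⟨a, t, hch₁, hp₁, rfl⟩, hr₁⟩ := exists_lt_of_csInf_lt (hSdne g) hg2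
    obtain ⟨r₂, ⟨b, u, hch₂, hp₂, rfl⟩, hr₂⟩ := exists_lt_of_csInf_lt (hSdne h) hh2
    have hj : S.Composable (t.getLastD a) b := by
      show S.src _ = S.tgt b
      have e1 : S.src (BKaux.prodL S a t) = S.src (t.getLastD a) := BKaux.src_prodL S t a hch₁
      have e2 : S.tgt (BKaux.prodL S b u) = S.tgt b := BKaux.tgt_prodL S u b hch₂
      rw [← e1, hp₁, ← e2, hp₂]; exact hc
    have hchapp : List.Chain' S.Composable ((a :: t) ++ (b :: u)) := by
      rw [List.Chain', List.isChain_append]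
      refine ⟨hch₁, hch₂, ?_⟩
      intro x hx y hy
      rw [BKaux.getLast?_cons_eq] at hx
      simp only [Option.mem_def, Option.some.injEq] at hx hy
      subst hx
      have : y = b := by simpa using hy.symm
      subst this
      exact hj
    have hmem : (((a :: t) ++ (b :: u)).map f).sum ∈ Sd (S.comp g h) := by
      refine ⟨a, t ++ b :: u, hchapp, ?_, rfl⟩
      rw [BKaux.prodL_append S hchapp, hp₁, hp₂]
    have hle := csInf_le (hSdbdd _) hmem
    rw [List.map_append, List.sum_append] at hle
    linarith
  -- the grey subgroupoid
  set W0 : G → ℝ := fun g => min 1 (2 * d g) with hW0def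
  set W : G → ℝ := fun g => max (W0 g) (W0 (S.inv g)) with hWdef
  have hW0mem : ∀ g, W0 g ∈ Set.Icc (0:ℝ) 1 :=
    fun g => ⟨le_min zero_le_one (by linarith [hd0 g]), min_le_left _ _⟩
  have hWmem : ∀ g, W g ∈ Set.Icc (0:ℝ) 1 := fun g =>
    ⟨le_trans (hW0mem g).1 (le_max_left _ _), max_le (hW0mem g).2 (hW0mem (S.inv g)).2⟩
  have hW0lt1 : ∀ g, W0 g < 1 → 2 * d g < 1 := by
    intro g hlt
    by_contra hle
    push_neg at hle
    rw [hW0def] at hlt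
    simp only [min_eq_left hle] at hlt
    exact lt_irrefl _ hlt
  have hW0unit0 : ∀ x ∈ S.units ∩ V, W0 x = 0 := by
    intro x hx
    have hfx : f x ≤ 0 := by
      by_contra hfx
      push_neg at hfx
      obtain ⟨n, hn⟩ := exists_pow_lt_of_lt_one hfx (by norm_num : (2⁻¹:ℝ) < 1)
      exact absurd (hfle n x (hZuV n hx)) (not_le.2 hn)
    have hdx : d x = 0 := le_antisymm
      (le_trans (csInf_le (hSdbdd x) ⟨x, [], List.isChain_singleton x, rfl, rfl⟩) (by simpa using hfx))
      (hd0 x)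
    rw [hW0def]
    simp [hdx]
  have hunits_src : ∀ x, x ∈ S.units → S.src x = x := fun x hx => hx
  have hW0unit1 : ∀ x, x ∈ S.units → x ∉ V → W0 x = 1 := by
    intro x hx hxV
    have h1 : (1:ℝ) ≤ 2 * d x := by
      by_contra hle
      push_neg at hle
      have hdx : d x < (2⁻¹:ℝ)^1 := by rw [pow_one]; linarith
      have := (hZs 1 x (hdlt 1 x hdx)).1
      rw [hunits_src x hx] at this
      exact hxV this
    rw [hW0def]
    simp [min_eq_left h1]
  have hWz : ∀ x ∈ S.units ∩ V, W x = 0 := by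
    intro x hx
    rw [hWdef]
    simp only [BKaux.unit_inv S hx.1, hW0unit0 x hx, max_self]
  -- openness
  have sumF2a : ∀ (t' : List G) (ms : List ℕ),
      List.Forall₂ (fun x m => x ∈ Z m) t' ms →
      (t'.map f).sum ≤ (ms.map (fun m => (2⁻¹:ℝ)^m)).sum := by
    intro t' ms h
    induction h with
    | nil => simp
    | cons h1 h2 ih =>
      simp only [List.map_cons, List.sum_cons]
      exact add_le_add (hfle _ _ h1) ih
  have sumF2b : ∀ (l' : List G) (ms : List ℕ) (ε : ℝ),
      List.Forall₂ (fun x m => x ∈ Z m ∧ (2⁻¹:ℝ)^m < f x + ε) l' ms →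
      (ms.map (fun m => (2⁻¹:ℝ)^m)).sum ≤ (l'.map f).sum + l'.length * ε := by
    intro l' ms ε h
    induction h with
    | nil => simp
    | cons h1 h2 ih =>
      simp only [List.map_cons, List.sum_cons, List.length_cons]
      push_cast
      have := h1.2
      linarith
  have hdopen : ∀ tt : ℝ, tt ≤ 1 → IsOpen {g | d g < tt} := by
    intro tt htt
    rw [isOpen_iff_forall_mem_open]
    intro g hg
    simp only [Set.mem_setOf_eq] at hg
    obtain ⟨r, ⟨a, l, hch, hprod, rfl⟩, hrt⟩ := exists_lt_of_csInf_lt (hSdne g) hg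
    set s := ((a :: l).map f).sum with hsdef
    set ε := (tt - s) / (a :: l).length with hεdef
    have hlenpos : (0:ℝ) < ((a :: l).length : ℝ) := by
      simp [List.length_cons]
      positivity
    have hεpos : 0 < ε := div_pos (by linarith) hlenpos
    have hwit : ∀ x ∈ (a :: l), ∃ m : ℕ, x ∈ Z m ∧ (2⁻¹:ℝ)^m < f x + ε := by
      intro x hx
      have hxs : f x ≤ s := by
        apply List.single_le_sum
        · intro y hy
          obtain ⟨z, _, rfl⟩ := List.mem_map.1 hy
          exact hf0 z
        · exact List.mem_map_of_mem hx
      have hx1 : f x < 1 := lt_of_le_of_lt hxs (lt_of_lt_of_le hrt htt)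
      have hlt : f x < min (f x + ε) 1 := lt_min (by linarith) hx1
      obtain ⟨r', hr', hlt'⟩ := exists_lt_of_csInf_lt (hSfne x) hlt
      rcases hr' with rfl | ⟨m, hm, rfl⟩
      · exact absurd (lt_of_lt_of_le hlt' (min_le_right _ _)) (lt_irrefl 1)
      · exact ⟨m, hm, lt_of_lt_of_le hlt' (min_le_left _ _)⟩
    obtain ⟨m₀, hm₀, hm₀lt⟩ := hwit a (List.mem_cons_self)
    obtain ⟨ms, hms⟩ := BKaux.exists_forall₂ l (fun x hx => hwit x (List.mem_cons_of_mem _ hx))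
    refine ⟨BKaux.sP S (Z m₀) (ms.map Z), ?_, ?_, ?_⟩
    · intro k hk
      obtain ⟨a', t', ha', hF', hch', hprodk⟩ := BKaux.sP_sub S _ _ _ hk
      have hFZ : List.Forall₂ (fun x m => x ∈ Z m) t' ms :=
        (List.forall₂_map_right_iff).1 hF'
      have hsum1 := sumF2a t' ms hFZ
      have hsum2 := sumF2b l ms ε hms
      have hdk : d k ≤ f a' + (t'.map f).sum := by
        have hmem : ((a' :: t').map f).sum ∈ Sd k := ⟨a', t', hch', hprodk, rfl⟩
        have h2 := csInf_le (hSdbdd k) hmem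
        simpa [List.map_cons, List.sum_cons] using h2
      have hfa' : f a' ≤ (2⁻¹:ℝ)^m₀ := hfle _ _ ha'
      have hεs : ε * ((l.length : ℝ) + 1) = tt - s := by
        rw [hεdef]
        have : ((a :: l).length : ℝ) = (l.length : ℝ) + 1 := by
          simp [List.length_cons]
        rw [this]
        field_simp
      have hsum3 : s = f a + (l.map f).sum := by
        rw [hsdef]; simp [List.map_cons, List.sum_cons]
      have hms_len : l.length = ms.length := List.Forall₂.length_eq hms
      simp only [Set.mem_setOf_eq]
      linarith
    · apply BKaux.sP_open S hTop hOpen _ _ (hZopen m₀)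
      intro B hB
      obtain ⟨m, _, rfl⟩ := List.mem_map.1 hB
      exact hZopen m
    · have hF : List.Forall₂ (· ∈ ·) l (ms.map Z) :=
        (List.forall₂_map_right_iff).2 (hms.imp (fun _ _ h => h.1))
      have := BKaux.mem_sP S hF hm₀ hch
      rwa [hprod] at this
  have hW0open : GreyOpen W0 := by
    intro r
    by_cases hr : r ≤ 1
    · have heq : {x | W0 x < r} = {x | d x < r / 2} := by
        ext x
        simp only [Set.mem_setOf_eq, hW0def]
        constructor
        · intro h
          rcases min_lt_iff.1 h with h | h
          · linarith
          · linarith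
        · intro h
          exact min_lt_iff.2 (Or.inr (by linarith))
      rw [heq]
      exact hdopen (r/2) (by linarith)
    · push_neg at hr
      have heq : {x | W0 x < r} = Set.univ :=
        Set.eq_univ_of_forall fun x => lt_of_le_of_lt (min_le_left _ _) hr
      rw [heq]; exact isOpen_univ
  have hWopen : GreyOpen W := by
    intro r
    have heq : {x | W x < r} = {x | W0 x < r} ∩ S.inv ⁻¹' {x | W0 x < r} := by
      ext x
      simp only [Set.mem_setOf_eq, Set.mem_inter_iff, Set.mem_preimage, hWdef, max_lt_iff]
    rw [heq]
    exact (hW0open r).inter ((hW0open r).preimage hTop.continuous_inv)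
  -- subadditivity
  have hW0sub : ∀ g h, S.Composable g h → W0 (S.comp g h) ≤ min 1 (W0 g + W0 h) := by
    intro g h hc
    refine le_min (min_le_left _ _) ?_
    rcases le_or_gt 1 (W0 g + W0 h) with hcase | hcase
    · exact le_trans (min_le_left _ _) hcase
    · have hg1 : W0 g < 1 := by have := (hW0mem h).1; linarith
      have hh1 : W0 h < 1 := by have := (hW0mem g).1; linarith
      have hg2 : 2 * d g < 1 := hW0lt1 g hg1
      have hh2 : 2 * d h < 1 := hW0lt1 h hh1
      have hWg : W0 g = 2 * d g := min_eq_right (le_of_lt hg2)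
      have hWh : W0 h = 2 * d h := min_eq_right (le_of_lt hh2)
      have hdc := hdcomp g h hc
      calc W0 (S.comp g h) ≤ 2 * d (S.comp g h) := min_le_right _ _
        _ ≤ 2 * d g + 2 * d h := by linarith
        _ = W0 g + W0 h := by rw [hWg, hWh]
  have hWsub : ∀ g h, S.Composable g h → W (S.comp g h) ≤ min 1 (W g + W h) := by
    intro g h hc
    have hc' : S.Composable (S.inv h) (S.inv g) := by
      show S.src _ = S.tgt _
      rw [S.src_inv, S.tgt_inv]; exact hc.symm
    apply max_le
    · refine le_trans (hW0sub g h hc) (min_le_min le_rfl ?_)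
      exact add_le_add (le_max_left _ _) (le_max_left _ _)
    · rw [BKaux.inv_comp S hc]
      refine le_trans (hW0sub _ _ hc') (min_le_min le_rfl ?_)
      have e1 : W0 (S.inv h) ≤ W h := le_max_right _ _
      have e2 : W0 (S.inv g) ≤ W g := le_max_right _ _
      linarith
  -- U ≤ W
  have hUleW0 : ∀ g, U g ≤ W0 g := by
    intro g
    rcases le_or_gt 1 (2 * d g) with hge | hlt
    · rw [hW0def]; simp only [min_eq_left hge]
      exact (hU01 g).2
    · have hW0eq : W0 g = 2 * d g := min_eq_right (le_of_lt hlt)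
      rcases eq_or_lt_of_le (hd0 g) with hdz | hdpos
      · have hAll : ∀ n, g ∈ Z n := fun n => hdlt n g (by rw [← hdz]; exact hhalfpos n)
        have hU0 : U g ≤ 0 := by
          by_contra hU
          push_neg at hU
          obtain ⟨n, hn⟩ := exists_pow_lt_of_lt_one hU (by norm_num : (2⁻¹:ℝ) < 1)
          have h5 := hZU n g (hAll n)
          have hmn : (2⁻¹:ℝ)^(n+1) ≤ (2⁻¹:ℝ)^n :=
            pow_le_pow_of_le_one (by norm_num) (by norm_num) (Nat.le_succ n)
          linarith
        rw [hW0eq]; linarith [hd0 g]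
      · have hdhalf : d g < (2⁻¹:ℝ)^1 := by rw [pow_one]; linarith
        have hex : ∃ m : ℕ, (2⁻¹:ℝ)^(m+2) ≤ d g := by
          obtain ⟨j, hj⟩ := exists_pow_lt_of_lt_one hdpos (by norm_num : (2⁻¹:ℝ) < 1)
          refine ⟨j, le_of_lt (lt_of_le_of_lt ?_ hj)⟩
          exact pow_le_pow_of_le_one (by norm_num) (by norm_num) (by omega)
        have h₁ : (2⁻¹:ℝ)^(Nat.find hex + 2) ≤ d g := Nat.find_spec hex
        have h₂ : d g < (2⁻¹:ℝ)^(Nat.find hex + 1) := by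
          rcases Nat.eq_zero_or_pos (Nat.find hex) with h0 | hposn
          · rw [h0, pow_one]; linarith
          · obtain ⟨m, hm⟩ := Nat.exists_eq_succ_of_ne_zero (Nat.pos_iff_ne_zero.1 hposn)
            have := Nat.find_min hex (m := m) (by omega)
            push_neg at this
            have e : m + 2 = Nat.find hex + 1 := by omega
            rwa [e] at this
        have hgZ : g ∈ Z (Nat.find hex + 1) := hdlt _ g h₂
        have hUlt : U g < (2⁻¹:ℝ)^(Nat.find hex + 2) := by
          have := hZU (Nat.find hex + 1) g hgZ
          have e : Nat.find hex + 1 + 1 = Nat.find hex + 2 := by omega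
          rwa [e] at this
        rw [hW0eq]
        linarith [hd0 g]
  have hUleW : ∀ g, U g ≤ W g := fun g => le_trans (hUleW0 g) (le_max_left _ _)
  -- strict unitality
  have hstrict : ∀ g, W g < 1 → W (S.src g) = 0 ∧ W (S.tgt g) = 0 := by
    intro g hWg
    have hW0g : W0 g < 1 := lt_of_le_of_lt (le_max_left _ _) hWg
    have h2d : 2 * d g < 1 := hW0lt1 g hW0g
    have hdg : d g < (2⁻¹:ℝ)^1 := by rw [pow_one]; linarith
    have hgZ : g ∈ Z 1 := hdlt 1 g hdg
    exact ⟨hWz _ ⟨S.src_src g, (hZs 1 g hgZ).1⟩, hWz _ ⟨S.src_of_tgt g, (hZs 1 g hgZ).2⟩⟩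
  -- dichotomy on units
  have hdich : ∀ x ∈ S.units, W x = 0 ∨ W x = 1 := by
    intro x hx
    by_cases hxV : x ∈ V
    · exact Or.inl (hWz x ⟨hx, hxV⟩)
    · right
      rw [hWdef]
      simp only [BKaux.unit_inv S hx, hW0unit1 x hx hxV, max_self]
  -- symmetry
  have hsymm : ∀ g, W (S.inv g) = W g := by
    intro g
    rw [hWdef]
    simp only [BKaux.inv_inv S g]
    exact max_comm _ _
  refine ⟨W, hWmem, hWopen, ⟨hWmem, hdich, hstrict, hsymm, hWsub⟩, hUleW, ?_⟩
  ext x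
  simp only [Set.mem_inter_iff, Set.mem_setOf_eq]
  constructor
  · rintro ⟨hx, hWx⟩
    refine ⟨hx, ?_⟩
    have hW0x : W0 x = 0 := le_antisymm (by rw [← hWx]; exact le_max_left _ _) (hW0mem x).1
    have h2d : d x = 0 := by
      rcases le_or_gt 1 (2 * d x) with hge | hlt
      · rw [hW0def] at hW0x
        simp only [min_eq_left hge] at hW0x
        linarith
      · rw [hW0def] at hW0x
        simp only [min_eq_right (le_of_lt hlt)] at hW0x
        linarith
    have hxZ : x ∈ Z 0 := hdlt 0 x (by rw [h2d, pow_zero]; norm_num)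
    have := (hZs 0 x hxZ).1
    rwa [hunits_src x hx] at this
  · rintro ⟨hx, hxV⟩
    exact ⟨hx, hWz x ⟨hx, hxV⟩⟩
end

section
/- Let X, Y be metric spaces of diameter ≤ 1 and g : E(X) → E(Y) an isometric bijection with g(δ_X(X)) = δ_Y(Y). Then there is a unique isometric bijection f : X → Y such that g = E(f). -/
open Set Metric

/-- A Katětov function on a (pseudo)metric space `W` (of diameter ≤ 1):
a 1-Lipschitz function into `[0,1]` with `d(z,w) ≤ u(z) + u(w)`. -/
def IsKatetov {W : Type*} [PseudoMetricSpace W]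
    (u : BoundedContinuousFunction W ℝ) : Prop :=
  (∀ z, u z ∈ Set.Icc (0 : ℝ) 1) ∧
  (∀ z w, |u z - u w| ≤ dist z w) ∧
  (∀ z w, dist z w ≤ u z + u w)

/-- The space `E(W)` of Katětov functions on `W`, with the sup metric
(inherited from the space of bounded continuous functions). -/
abbrev KatE (W : Type*) [PseudoMetricSpace W] : Type _ :=
  {u : BoundedContinuousFunction W ℝ // IsKatetov u}

/-- The canonical isometric embedding `δ_X : X → E(X)`, `x ↦ d(x,·)`,
described via its image: `v = δ_X x` iff `v = d(x,·)` pointwise. -/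
def IsDelta {X : Type*} [MetricSpace X] (x : X) (v : KatE X) : Prop :=
  ∀ y : X, v.val y = dist x y

noncomputable def deltaK {X : Type*} [MetricSpace X] (hdX : ∀ x x' : X, dist x x' ≤ 1)
    (x : X) : KatE X :=
  ⟨⟨⟨fun z => dist x z, Continuous.dist continuous_const continuous_id⟩,
    ⟨1, fun a b => by
      simp only [ContinuousMap.coe_mk, Real.dist_eq]
      rw [dist_comm x a, dist_comm x b]
      exact (abs_dist_sub_le a b x).trans (hdX a b)⟩⟩,
   fun z => ⟨dist_nonneg, hdX x z⟩,
   fun z w => by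
      show |dist x z - dist x w| ≤ dist z w
      rw [dist_comm x z, dist_comm x w]
      exact abs_dist_sub_le z w x,
   fun z w => by
      show dist z w ≤ dist x z + dist x w
      rw [dist_comm x z]
      exact dist_triangle z x w⟩

@[simp] theorem deltaK_apply {X : Type*} [MetricSpace X] (hdX : ∀ x x' : X, dist x x' ≤ 1)
    (x z : X) : (deltaK hdX x).val z = dist x z := rfl

theorem isDelta_deltaK {X : Type*} [MetricSpace X] (hdX : ∀ x x' : X, dist x x' ≤ 1)
    (x : X) : IsDelta x (deltaK hdX x) := fun _ => rfl

theorem isDelta_eq {X : Type*} [MetricSpace X] (hdX : ∀ x x' : X, dist x x' ≤ 1)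
    {x : X} {v : KatE X} (h : IsDelta x v) : v = deltaK hdX x :=
  Subtype.ext (BoundedContinuousFunction.ext fun z => h z)

theorem dist_deltaK {X : Type*} [MetricSpace X] (hdX : ∀ x x' : X, dist x x' ≤ 1)
    (u : KatE X) (x : X) : dist u (deltaK hdX x) = u.val x := by
  apply le_antisymm
  · rw [Subtype.dist_eq]
    refine (BoundedContinuousFunction.dist_le (u.2.1 x).1).mpr fun z => ?_
    rw [Real.dist_eq, deltaK_apply, abs_sub_le_iff]
    have h1 := (abs_le.mp (u.2.2.1 z x)).2
    have h2 := u.2.2.2 x z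
    rw [dist_comm x z] at *
    constructor <;> linarith
  · have h := BoundedContinuousFunction.dist_coe_le_dist
      (f := u.val) (g := (deltaK hdX x).val) x
    rw [← Subtype.dist_eq] at h
    simpa [Real.dist_eq, abs_of_nonneg (u.2.1 x).1] using h

theorem dist_deltaK_deltaK {X : Type*} [MetricSpace X] (hdX : ∀ x x' : X, dist x x' ≤ 1)
    (x x' : X) : dist (deltaK hdX x) (deltaK hdX x') = dist x x' := by
  rw [dist_deltaK hdX, deltaK_apply]

/-- If `X, Y` are metric spaces of diameter ≤ 1 and `g : E(X) → E(Y)` is an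
isometric bijection with `g(δ_X(X)) = δ_Y(Y)`, then there is a unique
isometric bijection `f : X → Y` with `g = E(f)`, where
`E(f)(u) = (y ↦ inf_x min(1, d(y, f x) + u(x)))`. -/
theorem katetov_functor_faithful {X Y : Type*} [MetricSpace X] [MetricSpace Y]
    (hdX : ∀ x x' : X, dist x x' ≤ 1) (hdY : ∀ y y' : Y, dist y y' ≤ 1)
    (g : KatE X → KatE Y) (hgiso : ∀ u v : KatE X, dist (g u) (g v) = dist u v)
    (hgbij : Function.Bijective g)
    (hgdelta : g '' {v | ∃ x : X, IsDelta x v} = {w | ∃ y : Y, IsDelta y w}) :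
    ∃! f : X → Y, Isometry f ∧ Function.Bijective f ∧
      ∀ (u : KatE X) (y : Y),
        (g u).val y = ⨅ x : X, min 1 (dist y (f x) + u.val x) := by
  by_cases hXe : Nonempty X
  swap
  · -- X empty, hence Y empty
    have hYe : IsEmpty Y := by
      by_contra hY
      rw [not_isEmpty_iff] at hY
      obtain ⟨y⟩ := hY
      have hm : deltaK hdY y ∈ {w | ∃ y : Y, IsDelta y w} := ⟨y, isDelta_deltaK hdY y⟩
      rw [← hgdelta] at hm
      obtain ⟨v, ⟨x, _⟩, _⟩ := hm
      exact hXe ⟨x⟩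
    have hXe' : IsEmpty X := not_nonempty_iff.mp hXe
    refine ⟨fun x => isEmptyElim x, ⟨fun x => isEmptyElim x,
        ⟨fun x => isEmptyElim x, fun y => isEmptyElim y⟩,
        fun u y => isEmptyElim y⟩, fun f' _ => funext fun x => isEmptyElim x⟩
  · -- main case: X nonempty
    have hx : ∀ x : X, ∃ y : Y, IsDelta y (g (deltaK hdX x)) := fun x => by
      have : g (deltaK hdX x) ∈ {w | ∃ y : Y, IsDelta y w} := by
        rw [← hgdelta]
        exact mem_image_of_mem g ⟨x, isDelta_deltaK hdX x⟩
      exact this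
    set f : X → Y := fun x => (hx x).choose with hfdef
    have hf : ∀ x : X, g (deltaK hdX x) = deltaK hdY (f x) :=
      fun x => isDelta_eq hdY (hx x).choose_spec
    have hiso : Isometry f := by
      refine Isometry.of_dist_eq fun x x' => ?_
      calc dist (f x) (f x') = dist (deltaK hdY (f x)) (deltaK hdY (f x')) :=
            (dist_deltaK_deltaK hdY _ _).symm
        _ = dist (g (deltaK hdX x)) (g (deltaK hdX x')) := by rw [hf, hf]
        _ = dist (deltaK hdX x) (deltaK hdX x') := hgiso _ _
        _ = dist x x' := dist_deltaK_deltaK hdX _ _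
    have hsurj : Function.Surjective f := by
      intro y
      have hm : deltaK hdY y ∈ g '' {v | ∃ x : X, IsDelta x v} := by
        rw [hgdelta]; exact ⟨y, isDelta_deltaK hdY y⟩
      obtain ⟨v, ⟨x, hxv⟩, hgv⟩ := hm
      refine ⟨x, ?_⟩
      have hv : v = deltaK hdX x := isDelta_eq hdX hxv
      have : deltaK hdY (f x) = deltaK hdY y := by rw [← hf, ← hv, hgv]
      have hd : dist (f x) y = 0 := by
        rw [← dist_deltaK_deltaK hdY, this, dist_self]
      exact eq_of_dist_eq_zero hd
    have hform : ∀ (u : KatE X) (y : Y),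
        (g u).val y = ⨅ x : X, min 1 (dist y (f x) + u.val x) := by
      intro u y
      obtain ⟨x₀, hx₀⟩ := hsurj y
      have hval : (g u).val y = u.val x₀ := by
        calc (g u).val y = dist (g u) (deltaK hdY y) := (dist_deltaK hdY _ _).symm
          _ = dist (g u) (g (deltaK hdX x₀)) := by rw [hf, hx₀]
          _ = dist u (deltaK hdX x₀) := hgiso _ _
          _ = u.val x₀ := dist_deltaK hdX _ _
      rw [hval]
      apply le_antisymm
      · refine le_ciInf fun x => le_min (u.2.1 x₀).2 ?_
        have hlip := (abs_le.mp (u.2.2.1 x₀ x)).2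
        have : dist y (f x) = dist x₀ x := by rw [← hx₀, hiso.dist_eq]
        linarith
      · have hb : BddBelow (Set.range fun x : X => min 1 (dist y (f x) + u.val x)) := by
          refine ⟨0, ?_⟩
          rintro r ⟨x, rfl⟩
          exact le_min zero_le_one (add_nonneg dist_nonneg (u.2.1 x).1)
        have h := ciInf_le hb x₀
        have : min 1 (dist y (f x₀) + u.val x₀) = u.val x₀ := by
          rw [← hx₀, dist_self, zero_add, min_eq_right (u.2.1 x₀).2]
        linarith
    refine ⟨f, ⟨hiso, ⟨hiso.injective, hsurj⟩, hform⟩, ?_⟩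
    intro f' ⟨hiso', hbij', hform'⟩
    funext x
    have h := hform' (deltaK hdX x) (f' x)
    rw [hf x, deltaK_apply] at h
    have hle : (⨅ x' : X, min 1 (dist (f' x) (f' x') + (deltaK hdX x).val x')) ≤ 0 := by
      have hb : BddBelow (Set.range fun x' : X =>
          min 1 (dist (f' x) (f' x') + (deltaK hdX x).val x')) := by
        refine ⟨0, ?_⟩
        rintro r ⟨x', rfl⟩
        exact le_min zero_le_one (add_nonneg dist_nonneg ((deltaK hdX x).2.1 x').1)
      have h2 := ciInf_le hb x
      simpa using h2
    have : dist (f x) (f' x) ≤ 0 := h ▸ hle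
    exact (eq_of_dist_eq_zero (le_antisymm this dist_nonneg)).symm
end
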